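/- Every strict directed container (S ◁ P⁺, ↓⁺, ⊕⁺) induces a directed container with positions P s = Option (P⁺ s), subshape s ↓ none = s and s ↓ some p = s ↓⁺ p, root o = none, and none ⊕ p = p, some p ⊕ none = some p, some p ⊕ some p' = some (p ⊕⁺ p'): the five directed container laws follow from the two strict directed container laws. -/

import Mathlib

/-- A strict directed container `(S ◁ P⁺, ↓⁺, ⊕⁺)` (the second law stated with
`HEq`, since the position types agree only propositionally by the first law). -/
structure SDCont where
  S : Type
  P : S → Type
  dn : ∀ s : S, P s → S
  add : ∀ (s : S) (p : P s), P (dn s p) → P s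
  law1 : ∀ (s : S) (p : P s) (p' : P (dn s p)), dn s (add s p p') = dn (dn s p) p'
  law2 : ∀ (s : S) (p : P s) (p' : P (dn s p))
    (q : P (dn s (add s p p'))) (q' : P (dn (dn s p) p')),
    HEq q q' → add s (add s p p') q = add s p (add (dn s p) p' q')

/-- Positions of the induced directed container: `P s = Option (P⁺ s)`. -/
def SDCont.oP (D : SDCont) (s : D.S) : Type := Option (D.P s)

/-- Induced subshape: `s ↓ none = s`, `s ↓ some p = s ↓⁺ p`. -/
def SDCont.odn (D : SDCont) (s : D.S) : D.oP s → D.S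
  | none => s
  | some p => D.dn s p

/-- Induced root: `o = none`. -/
def SDCont.oroot (D : SDCont) (s : D.S) : D.oP s := none

/-- Induced translation: `none ⊕ p = p`, `some p ⊕ none = some p`,
`some p ⊕ some p' = some (p ⊕⁺ p')`. -/
def SDCont.oadd (D : SDCont) (s : D.S) :
    ∀ p : D.oP s, D.oP (D.odn s p) → D.oP s
  | none, p' => p'
  | some p, none => some p
  | some p, some p' => some (D.add s p p')

/-- Every strict directed container induces a directed container: the five
directed container laws hold for the induced `Option`-based structure (laws 4
and 5 stated with `HEq`, since the position types agree only propositionally). -/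

private theorem heq_some_some {A B : Type} (h : A = B) {a : A} {b : B}
    (hh : HEq (some a) (some b)) : HEq a b := by
  subst h; exact heq_of_eq (Option.some.inj (eq_of_heq hh))

private theorem heq_some_none {A B : Type} (h : A = B) {a : A}
    (hh : HEq (some a : Option A) (none : Option B)) : False := by
  subst h; exact absurd (eq_of_heq hh) (Option.some_ne_none _)

private theorem heq_none_some {A B : Type} (h : A = B) {b : B}
    (hh : HEq (none : Option A) (some b)) : False := by
  subst h; exact absurd (eq_of_heq hh) (Option.some_ne_none _).symm

theorem strict_directed_container_induces_directed_container (D : SDCont) :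
    (∀ s : D.S, D.odn s (D.oroot s) = s) ∧
    (∀ (s : D.S) (p : D.oP s) (p' : D.oP (D.odn s p)),
      D.odn s (D.oadd s p p') = D.odn (D.odn s p) p') ∧
    (∀ (s : D.S) (p : D.oP s), D.oadd s p (D.oroot (D.odn s p)) = p) ∧
    (∀ (s : D.S) (p : D.oP s) (phat : D.oP (D.odn s (D.oroot s))),
      HEq p phat → D.oadd s (D.oroot s) phat = p) ∧
    (∀ (s : D.S) (p : D.oP s) (p' : D.oP (D.odn s p))
      (q : D.oP (D.odn s (D.oadd s p p'))) (q' : D.oP (D.odn (D.odn s p) p')),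
      HEq q q' → D.oadd s (D.oadd s p p') q = D.oadd s p (D.oadd (D.odn s p) p' q')) := by
  refine ⟨fun s => rfl, ?_, ?_, ?_, ?_⟩
  · rintro s (_|p) (_|p') <;> first | rfl | exact D.law1 s p p'
  · rintro s (_|p) <;> rfl
  · rintro s p phat h; exact (eq_of_heq h).symm
  · rintro s (_|p) <;> rintro (_|p') <;> intro q q' h
    · exact eq_of_heq h
    · cases eq_of_heq h; rfl
    · cases eq_of_heq h; rfl
    · have ht : D.P (D.dn s (D.add s p p')) = D.P (D.dn (D.dn s p) p') := by
        exact congrArg D.P (D.law1 s p p')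
      rcases q with _|a <;> rcases q' with _|b
      · rfl
      · exact absurd h (fun hh => heq_none_some ht hh)
      · exact absurd h (fun hh => heq_some_none ht hh)
      · exact congrArg some (D.law2 s p p' a b (heq_some_some ht h))
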